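/- Let R and S be orthogonal projections on a real Hilbert space H with ker(R) ∩ ker(S) = {0}, r ∈ ran(R), s ∈ ran(S), with f₀ = argmin{‖Sf − s‖ : Rf = r}, f₁ = argmin{‖Rf − r‖ : Sf = s}, and δ := ‖f₁ − f₀‖. For τ ∈ (0,1)\{1/2} strictly between 1/2 and ε/(ε+η) (for given ε, η > 0 with ε ≠ η), the quantity (1−τ)ε² − τη² + (1−τ)τ(1−2τ)δ² is nonzero, provided (1−τ)τδ² ≤ (1−τ)ε² + τη². -/

import Mathlib

open scoped RealInnerProductSpace

/-- For `τ` strictly between `1/2` and `ε/(ε+η)`, the denominator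
`(1-τ)ε² - τη² + (1-τ)τ(1-2τ)δ²` does not vanish, where `δ = ‖f₁ - f₀‖`. -/
theorem stmt_11
    {H : Type*} [NormedAddCommGroup H] [InnerProductSpace ℝ H] [CompleteSpace H]
    (R S : H →L[ℝ] H)
    (hR : IsSelfAdjoint R) (hRi : R ∘L R = R)
    (hS : IsSelfAdjoint S) (hSi : S ∘L S = S)
    (hker : LinearMap.ker (R : H →ₗ[ℝ] H) ⊓ LinearMap.ker (S : H →ₗ[ℝ] H) = ⊥)
    (r s : H) (hr : r ∈ LinearMap.range (R : H →ₗ[ℝ] H)) (hs : s ∈ LinearMap.range (S : H →ₗ[ℝ] H))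
    (f₀ f₁ : H)
    (hf₀ : R f₀ = r ∧ IsMinOn (fun f : H => ‖S f - s‖) {f : H | R f = r} f₀)
    (hf₁ : S f₁ = s ∧ IsMinOn (fun f : H => ‖R f - r‖) {f : H | S f = s} f₁)
    (δ : ℝ) (hδ : δ = ‖f₁ - f₀‖)
    (ε η : ℝ) (hε : 0 < ε) (hη : 0 < η) (hεη : ε ≠ η)
    (τ : ℝ) (hτ0 : 0 < τ) (hτ1 : τ < 1)
    (hτlo : min (1 / 2) (ε / (ε + η)) < τ) (hτhi : τ < max (1 / 2) (ε / (ε + η)))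
    (hbound : (1 - τ) * τ * δ ^ 2 ≤ (1 - τ) * ε ^ 2 + τ * η ^ 2) :
    (1 - τ) * ε ^ 2 - τ * η ^ 2 + (1 - τ) * τ * (1 - 2 * τ) * δ ^ 2 ≠ 0 := by
  have hsum : (0:ℝ) < ε + η := by linarith
  rcases lt_or_gt_of_ne hεη with h | h
  · -- ε < η : quantity is negative
    have hx : ε / (ε + η) < 1 / 2 := by
      rw [div_lt_iff₀ hsum]; linarith
    have hlo : ε / (ε + η) < τ := by rwa [min_eq_right (le_of_lt hx)] at hτlo
    have hhi : τ < 1 / 2 := lt_of_lt_of_le hτhi (by rw [max_le_iff]; exact ⟨le_rfl, le_of_lt hx⟩)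
    have h1 : ε < τ * (ε + η) := by
      rw [div_lt_iff₀ hsum] at hlo; linarith
    have h2 : (1 - τ) * ε < τ * η := by nlinarith
    apply ne_of_lt
    nlinarith [sq_nonneg δ, mul_pos hτ0 (sub_pos.mpr hτ1), mul_pos hε hη,
      mul_self_lt_mul_self (mul_nonneg (by linarith) hε.le) h2]
  · -- ε > η : quantity is positive
    have hx : 1 / 2 < ε / (ε + η) := by
      rw [lt_div_iff₀ hsum]; linarith
    have hlo : 1 / 2 < τ := by rwa [min_eq_left (le_of_lt hx)] at hτlo
    have hhi : τ < ε / (ε + η) := lt_of_lt_of_le hτhi (by rw [max_le_iff]; exact ⟨le_of_lt hx, le_rfl⟩)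
    have h1 : τ * (ε + η) < ε := by
      rw [lt_div_iff₀ hsum] at hhi; linarith
    have h2 : τ * η < (1 - τ) * ε := by nlinarith
    apply ne_of_gt
    nlinarith [sq_nonneg δ, mul_pos hτ0 (sub_pos.mpr hτ1),
      mul_self_lt_mul_self (mul_nonneg hτ0.le hη.le) h2]
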